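/- Let Ω be the open rhombus {(x,y) : a|x| + b|y| < 1} for a, b > 0, let c > 0, and let u : Ω → [−c, c] be a doubly increasing function such that u is differentiable almost everywhere with u_x = c·a and u_y = c·b almost everywhere on Ω. Then u(x,y) = c(ax + by) for every (x,y) ∈ Ω. -/

import Mathlib

open Set MeasureTheory

/-- Key 1-D fact: a monotone function whose derivative is `m` a.e. on an open interval
increases at least at rate `m` there. -/
lemma stmt16_mono_deriv_lb {G : ℝ → ℝ} (hG : Monotone G) {m α β : ℝ} (hm : 0 < m)
    (hd : ∀ᵐ x, x ∈ Set.Ioo α β → HasDerivAt G m x) {t₁ t₂ : ℝ}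
    (h1 : t₁ ∈ Set.Ioo α β) (h2 : t₂ ∈ Set.Ioo α β) (h12 : t₁ < t₂) :
    m * (t₂ - t₁) ≤ G t₂ - G t₁ := by
  set μ := hG.stieltjesFunction.measure with hμ
  have hae : ∀ᵐ x, x ∈ Set.Ioo α β → μ.rnDeriv volume x = ENNReal.ofReal m := by
    filter_upwards [hG.ae_hasDerivAt, Measure.rnDeriv_lt_top μ volume, hd] with x hx hlt hdx hmem
    have h := (hdx hmem).unique hx
    show hG.stieltjesFunction.measure.rnDeriv volume x = ENNReal.ofReal m
    rw [h, ENNReal.ofReal_toReal]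
    exact hlt.ne
  have key : ∀ t' ∈ Set.Ioo t₁ t₂, m * (t' - t₁) ≤ G t₂ - G t₁ := by
    intro t' ht'
    have hsub : Set.Ioc t₁ t' ⊆ Set.Ioo α β := fun x hx =>
      ⟨h1.1.trans hx.1, lt_of_le_of_lt hx.2 (ht'.2.trans h2.2)⟩
    have hint : ENNReal.ofReal (m * (t' - t₁)) ≤ μ (Set.Ioc t₁ t') := by
      have e1 : ∫⁻ x in Set.Ioc t₁ t', ENNReal.ofReal m ∂volume
          = ENNReal.ofReal (m * (t' - t₁)) := by
        rw [setLIntegral_const, Real.volume_Ioc, ← ENNReal.ofReal_mul hm.le]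
      have e2 : ∫⁻ x in Set.Ioc t₁ t', ENNReal.ofReal m ∂volume
          = ∫⁻ x in Set.Ioc t₁ t', μ.rnDeriv volume x ∂volume := by
        refine lintegral_congr_ae ?_
        have : ∀ᵐ x ∂(volume.restrict (Set.Ioc t₁ t')),
            μ.rnDeriv volume x = ENNReal.ofReal m := by
          rw [ae_restrict_iff' measurableSet_Ioc]
          filter_upwards [hae] with x hx hmem using hx (hsub hmem)
        filter_upwards [this] with x hx using hx.symm
      rw [← e1, e2]
      exact Measure.setLIntegral_rnDeriv_le _
    rw [hμ, hG.stieltjesFunction.measure_Ioc] at hint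
    have h3 : m * (t' - t₁) ≤ hG.stieltjesFunction t' - hG.stieltjesFunction t₁ := by
      have hnn : (0:ℝ) ≤ hG.stieltjesFunction t' - hG.stieltjesFunction t₁ :=
        sub_nonneg.2 (hG.stieltjesFunction.mono (le_of_lt ht'.1))
      exact (ENNReal.ofReal_le_ofReal_iff hnn).mp hint
    have h4 : hG.stieltjesFunction t' ≤ G t₂ := hG.rightLim_le ht'.2
    have h5 : G t₁ ≤ hG.stieltjesFunction t₁ := hG.le_rightLim le_rfl
    linarith
  by_contra hcon
  push_neg at hcon
  set ε := m * (t₂ - t₁) - (G t₂ - G t₁) with hε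
  have hεpos : 0 < ε := by linarith
  set t' := max ((t₁ + t₂)/2) (t₂ - ε/(2*m)) with ht'
  have h1' : t₁ < t' := lt_of_lt_of_le (by linarith) (le_max_left _ _)
  have h2' : t' < t₂ := max_lt (by linarith) (by
    have : 0 < ε/(2*m) := by positivity
    linarith)
  have := key t' ⟨h1', h2'⟩
  have h6 : t₂ - ε/(2*m) ≤ t' := le_max_right _ _
  have h7 : m * (t₂ - ε/(2*m) - t₁) ≤ m * (t' - t₁) := by nlinarith
  have h8 : m * (ε/(2*m)) = ε/2 := by field_simp
  nlinarith

/-- The linear change of variables `(x, y) ↦ ((ax - by)/2, (ax + by)/2)`. -/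
noncomputable def stmt16_L (a b : ℝ) : (ℝ × ℝ) →ₗ[ℝ] (ℝ × ℝ) where
  toFun p := ((a * p.1 - b * p.2)/2, (a * p.1 + b * p.2)/2)
  map_add' p q := by
    ext <;> simp only [Prod.fst_add, Prod.snd_add] <;> ring
  map_smul' r p := by
    ext <;> simp only [Prod.smul_fst, Prod.smul_snd, smul_eq_mul, RingHom.id_apply] <;> ring

lemma stmt16_memS {a b s t : ℝ} (ha : 0 < a) (hb : 0 < b)
    (hs : |s| < 1/2) (ht : |t| < 1/2) :
    a * |(s + t)/a| + b * |(t - s)/b| < 1 := by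
  rw [abs_div, abs_div, abs_of_pos ha, abs_of_pos hb]
  rw [mul_div_cancel₀ _ ha.ne', mul_div_cancel₀ _ hb.ne']
  rw [abs_lt] at hs ht
  rcases abs_cases (s + t) with ⟨e1, _⟩ | ⟨e1, _⟩ <;>
    rcases abs_cases (t - s) with ⟨e2, _⟩ | ⟨e2, _⟩ <;> rw [e1, e2] <;> linarith

set_option maxHeartbeats 1000000 in
theorem stmt16 (a b c : ℝ) (ha : 0 < a) (hb : 0 < b) (hc : 0 < c)
    (u : ℝ × ℝ → ℝ)
    (hval : ∀ p ∈ {p : ℝ × ℝ | a * |p.1| + b * |p.2| < 1}, u p ∈ Set.Icc (-c) c)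
    (hmono : ∀ p ∈ {p : ℝ × ℝ | a * |p.1| + b * |p.2| < 1},
      ∀ q ∈ {p : ℝ × ℝ | a * |p.1| + b * |p.2| < 1},
        p.1 ≤ q.1 → p.2 ≤ q.2 → u p ≤ u q)
    (hderiv : ∀ᵐ p ∂(volume.restrict {p : ℝ × ℝ | a * |p.1| + b * |p.2| < 1}),
      DifferentiableAt ℝ u p ∧ fderiv ℝ u p (1, 0) = c * a ∧
        fderiv ℝ u p (0, 1) = c * b) :
    ∀ p ∈ {p : ℝ × ℝ | a * |p.1| + b * |p.2| < 1},
      u p = c * (a * p.1 + b * p.2) := by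
  set S : Set (ℝ × ℝ) := {p : ℝ × ℝ | a * |p.1| + b * |p.2| < 1} with hS
  set P : ℝ × ℝ → Prop := fun p => DifferentiableAt ℝ u p ∧ fderiv ℝ u p (1, 0) = c * a ∧
        fderiv ℝ u p (0, 1) = c * b with hP
  have hSopen : IsOpen S := by
    apply isOpen_lt _ continuous_const
    exact (continuous_const.mul continuous_fst.abs).add (continuous_const.mul continuous_snd.abs)
  have hae : ∀ᵐ p : ℝ × ℝ, p ∈ S → P p := (ae_restrict_iff' hSopen.measurableSet).1 hderiv
  have hN : volume {p : ℝ × ℝ | ¬ (p ∈ S → P p)} = 0 := ae_iff.1 hae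
  -- transfer the null set through the linear change of variables
  set T : ℝ × ℝ → ℝ × ℝ := fun q => ((q.1 + q.2)/a, (q.2 - q.1)/b) with hT
  have hTL : ∀ q : ℝ × ℝ, stmt16_L a b (T q) = q := by
    intro q
    show ((a * ((q.1 + q.2)/a) - b * ((q.2 - q.1)/b))/2,
      (a * ((q.1 + q.2)/a) + b * ((q.2 - q.1)/b))/2) = q
    rw [mul_div_cancel₀ _ ha.ne', mul_div_cancel₀ _ hb.ne']
    ext <;> simp <;> ring
  have hLT : ∀ p : ℝ × ℝ, T (stmt16_L a b p) = p := by
    intro p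
    show (((a * p.1 - b * p.2)/2 + (a * p.1 + b * p.2)/2)/a,
      ((a * p.1 + b * p.2)/2 - (a * p.1 - b * p.2)/2)/b) = p
    ext <;> simp only <;> field_simp <;> ring
  have hpre : T ⁻¹' {p : ℝ × ℝ | ¬ (p ∈ S → P p)} = stmt16_L a b '' {p : ℝ × ℝ | ¬ (p ∈ S → P p)} := by
    ext q
    constructor
    · intro hq
      exact ⟨T q, hq, hTL q⟩
    · rintro ⟨p, hp, rfl⟩
      show ¬ (T (stmt16_L a b p) ∈ S → P (T (stmt16_L a b p)))
      rw [hLT p]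
      exact hp
  haveI : (volume : Measure (ℝ × ℝ)).IsAddHaarMeasure := by
    rw [Measure.volume_eq_prod]
    infer_instance
  have hTN : volume (T ⁻¹' {p : ℝ × ℝ | ¬ (p ∈ S → P p)}) = 0 := by
    rw [hpre, Measure.addHaar_image_linearMap, hN, mul_zero]
  have hQ : ∀ᵐ q : ℝ × ℝ, (T q ∈ S → P (T q)) := by
    rw [ae_iff]
    exact hTN
  rw [Measure.volume_eq_prod] at hQ
  have hslice : ∀ᵐ s : ℝ, ∀ᵐ t : ℝ, (T (s, t) ∈ S → P (T (s, t))) :=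
    Measure.ae_ae_of_ae_prod hQ
  -- membership lemma
  have hmem : ∀ s t : ℝ, |s| < 1/2 → |t| < 1/2 → T (s, t) ∈ S := by
    intro s t hs ht
    exact stmt16_memS ha hb hs ht
  -- the slice derivative
  have hsderiv : ∀ s t : ℝ, P (T (s, t)) →
      HasDerivAt (fun τ => u (T (s, τ))) (2 * c) t := by
    intro s t hPt
    have hφ : HasDerivAt (fun τ : ℝ => T (s, τ)) (1/a, 1/b) t := by
      have h1 : HasDerivAt (fun τ : ℝ => (s + τ)/a) (1/a) t :=
        ((hasDerivAt_id t).const_add s).div_const a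
      have h2 : HasDerivAt (fun τ : ℝ => (τ - s)/b) (1/b) t :=
        ((hasDerivAt_id t).sub_const s).div_const b
      exact h1.prodMk h2
    have hcomp := hPt.1.hasFDerivAt.comp_hasDerivAt t hφ
    have heval : fderiv ℝ u (T (s, t)) (1/a, 1/b) = 2 * c := by
      have hsplit : ((1/a, 1/b) : ℝ × ℝ) = (1/a) • ((1 : ℝ), (0 : ℝ)) + (1/b) • ((0 : ℝ), (1 : ℝ)) := by
        ext <;> simp
      rw [hsplit, map_add, ContinuousLinearMap.map_smul, ContinuousLinearMap.map_smul,
        hPt.2.1, hPt.2.2]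
      simp only [smul_eq_mul]
      field_simp
      ring
    rw [heval] at hcomp
    exact hcomp
  -- Claim 1: on good slices, u is the linear function
  have claim1 : ∀ s : ℝ, |s| < 1/2 → (∀ᵐ t : ℝ, (T (s, t) ∈ S → P (T (s, t)))) →
      ∀ t : ℝ, |t| < 1/2 → u (T (s, t)) = 2 * c * t := by
    intro s hs hgood t ht
    rw [abs_lt] at ht
    -- increment bound
    have incr : ∀ t₁ t₂ : ℝ, -(1/2) < t₁ → t₁ < t₂ → t₂ < 1/2 →
        2 * c * (t₂ - t₁) ≤ u (T (s, t₂)) - u (T (s, t₁)) := by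
      intro t₁ t₂ hl hm12 hr
      set l : ℝ := (t₁ - 1/2)/2 with hldef
      set r : ℝ := (t₂ + 1/2)/2 with hrdef
      have hl1 : -(1/2) < l := by rw [hldef]; linarith
      have hl2 : l < t₁ := by rw [hldef]; linarith
      have hr1 : t₂ < r := by rw [hrdef]; linarith
      have hr2 : r < 1/2 := by rw [hrdef]; linarith
      have hsubI : ∀ τ : ℝ, l ≤ τ → τ ≤ r → |τ| < 1/2 := by
        intro τ hτ1 hτ2
        rw [abs_lt]
        constructor <;> linarith
      set clamp : ℝ → ℝ := fun τ => max l (min r τ) with hclamp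
      have hcl_mem : ∀ τ : ℝ, l ≤ clamp τ ∧ clamp τ ≤ r := by
        intro τ
        refine ⟨le_max_left _ _, max_le (by linarith) (min_le_left _ _)⟩
      have hcl_mono : Monotone clamp :=
        fun x y hxy => max_le_max le_rfl (min_le_min le_rfl hxy)
      set G : ℝ → ℝ := fun τ => u (T (s, clamp τ)) with hG
      have hGmono : Monotone G := by
        intro x y hxy
        have h1 := (hcl_mem x).1
        have h2 := (hcl_mem x).2
        have h3 := (hcl_mem y).1
        have h4 := (hcl_mem y).2
        have hcxy : clamp x ≤ clamp y := hcl_mono hxy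
        refine hmono _ (hmem s (clamp x) hs (hsubI _ h1 h2)) _
          (hmem s (clamp y) hs (hsubI _ h3 h4)) ?_ ?_
        · show (s + clamp x)/a ≤ (s + clamp y)/a
          exact (div_le_div_iff_of_pos_right ha).2 (by linarith)
        · show (clamp x - s)/b ≤ (clamp y - s)/b
          exact (div_le_div_iff_of_pos_right hb).2 (by linarith)
      have hGd : ∀ᵐ x : ℝ, x ∈ Set.Ioo l r → HasDerivAt G (2 * c) x := by
        filter_upwards [hgood] with x hx hxmem
        have hxabs : |x| < 1/2 := hsubI x hxmem.1.le hxmem.2.le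
        have hxS : T (s, x) ∈ S := hmem s x hs hxabs
        have hPx : P (T (s, x)) := hx hxS
        have hder := hsderiv s x hPx
        have hev : (fun τ => u (T (s, τ))) =ᶠ[nhds x] G := by
          filter_upwards [Ioo_mem_nhds hxmem.1 hxmem.2] with y hy
          have : clamp y = y := by
            rw [hclamp]
            simp only
            rw [min_eq_right hy.2.le, max_eq_right hy.1.le]
          rw [hG]
          simp only [this]
        exact hder.congr_of_eventuallyEq hev.symm
      have hres := stmt16_mono_deriv_lb hGmono (by linarith : (0:ℝ) < 2 * c) hGd
        (t₁ := t₁) (t₂ := t₂) ⟨hl2, by linarith⟩ ⟨by linarith, hr1⟩ hm12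
      have hc1 : clamp t₁ = t₁ := by
        rw [hclamp]; simp only
        rw [min_eq_right (by linarith : t₁ ≤ r), max_eq_right hl2.le]
      have hc2 : clamp t₂ = t₂ := by
        rw [hclamp]; simp only
        rw [min_eq_right (by linarith : t₂ ≤ r), max_eq_right (by linarith : l ≤ t₂)]
      rw [hG] at hres
      simp only [hc1, hc2] at hres
      exact hres
    have htabs : |t| < 1/2 := abs_lt.2 ht
    have htS : T (s, t) ∈ S := hmem s t hs htabs
    -- lower bound
    have hlow : ∀ ε : ℝ, 0 < ε → 2 * c * t - ε ≤ u (T (s, t)) := by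
      intro ε hε
      set t₁ : ℝ := -(1/2) + min (ε/(2*c)) ((t + 1/2)/2) with ht₁
      clear_value t₁
      have hmin1 : min (ε/(2*c)) ((t + 1/2)/2) ≤ ε/(2*c) := min_le_left _ _
      have hmin2 : min (ε/(2*c)) ((t + 1/2)/2) ≤ (t + 1/2)/2 := min_le_right _ _
      have hminpos : 0 < min (ε/(2*c)) ((t + 1/2)/2) :=
        lt_min (by positivity) (by linarith)
      have h1 : -(1/2) < t₁ := by rw [ht₁]; linarith
      have h2 : t₁ < t := by rw [ht₁]; linarith
      have h3 := incr t₁ t h1 h2 ht.2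
      have ht₁abs : |t₁| < 1/2 := abs_lt.2 ⟨h1, by rw [ht₁]; linarith⟩
      have hv := hval _ (hmem s t₁ hs ht₁abs)
      have h4 : -c ≤ u (T (s, t₁)) := hv.1
      have h5 : 2 * c * (t₁ + 1/2) ≤ ε := by
        rw [ht₁]
        have : 2 * c * (ε/(2*c)) = ε := by field_simp
        nlinarith [hmin1, hminpos]
      linarith only [h3, h4, h5]
    have hhigh : ∀ ε : ℝ, 0 < ε → u (T (s, t)) ≤ 2 * c * t + ε := by
      intro ε hε
      set t₂ : ℝ := 1/2 - min (ε/(2*c)) ((1/2 - t)/2) with ht₂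
      clear_value t₂
      have hmin1 : min (ε/(2*c)) ((1/2 - t)/2) ≤ ε/(2*c) := min_le_left _ _
      have hmin2 : min (ε/(2*c)) ((1/2 - t)/2) ≤ (1/2 - t)/2 := min_le_right _ _
      have hminpos : 0 < min (ε/(2*c)) ((1/2 - t)/2) :=
        lt_min (by positivity) (by linarith)
      have h1 : t₂ < 1/2 := by rw [ht₂]; linarith
      have h2 : t < t₂ := by rw [ht₂]; linarith
      have h3 := incr t t₂ ht.1 h2 h1
      have ht₂abs : |t₂| < 1/2 := abs_lt.2 ⟨by rw [ht₂]; linarith, h1⟩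
      have hv := hval _ (hmem s t₂ hs ht₂abs)
      have h4 : u (T (s, t₂)) ≤ c := hv.2
      have h5 : 2 * c * (1/2 - t₂) ≤ ε := by
        rw [ht₂]
        have : 2 * c * (ε/(2*c)) = ε := by field_simp
        nlinarith [hmin1, hminpos]
      linarith only [h3, h4, h5]
    have hle : u (T (s, t)) ≤ 2 * c * t := by
      refine le_of_forall_sub_le ?_
      intro ε hε
      linarith [hhigh ε hε]
    have hge : 2 * c * t ≤ u (T (s, t)) := by
      refine le_of_forall_sub_le ?_
      intro ε hε
      linarith [hlow ε hε]
    linarith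
  -- good slices have full measure
  have hAfull : volume {s : ℝ | ¬ (∀ᵐ t : ℝ, (T (s, t) ∈ S → P (T (s, t))))} = 0 :=
    ae_iff.1 hslice
  have hdense : ∀ s δ : ℝ, 0 < δ → ∃ s' : ℝ, s < s' ∧ s' < s + δ ∧
      (∀ᵐ t : ℝ, (T (s', t) ∈ S → P (T (s', t)))) := by
    intro s δ hδ
    by_contra hcon
    push_neg at hcon
    have hsub : Set.Ioo s (s + δ) ⊆ {s : ℝ | ¬ (∀ᵐ t : ℝ, (T (s, t) ∈ S → P (T (s, t))))} := by
      intro x hx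
      intro hgood
      exact (hcon x hx.1 hx.2) (hgood.mono fun t ht h => h.2 (ht h.1))
    have : volume (Set.Ioo s (s + δ)) ≤
        volume {s : ℝ | ¬ (∀ᵐ t : ℝ, (T (s, t) ∈ S → P (T (s, t))))} := measure_mono hsub
    rw [hAfull, Real.volume_Ioo] at this
    simp only [le_zero_iff, ENNReal.ofReal_eq_zero] at this
    linarith
  -- final assembly
  intro p hp
  set s : ℝ := (a * p.1 - b * p.2)/2 with hsdef
  set t : ℝ := (a * p.1 + b * p.2)/2 with htdef
  have hpeq : T (s, t) = p := hLT p
  have habs : a * |p.1| + b * |p.2| < 1 := hp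
  have hax : |a * p.1| = a * |p.1| := by rw [abs_mul, abs_of_pos ha]
  have hby : |b * p.2| = b * |p.2| := by rw [abs_mul, abs_of_pos hb]
  have hs : |s| < 1/2 := by
    have h1 : |a * p.1 - b * p.2| < 1 := by
      have := abs_sub (a * p.1) (b * p.2)
      rw [hax, hby] at this
      linarith
    rw [hsdef, abs_div, abs_two]
    linarith
  have ht : |t| < 1/2 := by
    have h1 : |a * p.1 + b * p.2| < 1 := by
      have := abs_add_le (a * p.1) (b * p.2)
      rw [hax, hby] at this
      linarith
    rw [htdef, abs_div, abs_two]
    linarith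
  rw [abs_lt] at hs ht
  have goal2 : u p = 2 * c * t := by
    have hle : u p ≤ 2 * c * t := by
      refine le_of_forall_sub_le ?_
      intro ε hε
      set δ : ℝ := min (ε/(2*c)) (min (1/2 - s) (min (1/2 - t) (t + 1/2))) with hδdef
      have hδ1 : δ ≤ ε/(2*c) := min_le_left _ _
      have hδ2 : δ ≤ 1/2 - s := le_trans (min_le_right _ _) (min_le_left _ _)
      have hδ3 : δ ≤ 1/2 - t :=
        le_trans (min_le_right _ _) (le_trans (min_le_right _ _) (min_le_left _ _))
      have hδpos : 0 < δ := by
        refine lt_min (by positivity) (lt_min (by linarith) (lt_min (by linarith) (by linarith)))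
      clear_value δ
      obtain ⟨s', hs'1, hs'2, hgood'⟩ := hdense s δ hδpos
      set t' : ℝ := t + (s' - s) with ht'def
      clear_value t'
      have hs'abs : |s'| < 1/2 := abs_lt.2 ⟨by linarith, by linarith⟩
      have ht'abs : |t'| < 1/2 := abs_lt.2 ⟨by rw [ht'def]; linarith, by rw [ht'def]; linarith⟩
      have hmono1 : u (T (s, t)) ≤ u (T (s', t')) := by
        refine hmono _ (hmem s t (abs_lt.2 hs) (abs_lt.2 ht)) _ (hmem s' t' hs'abs ht'abs) ?_ ?_
        · show (s + t)/a ≤ (s' + t')/a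
          exact (div_le_div_iff_of_pos_right ha).2 (by rw [ht'def]; linarith)
        · show (t - s)/b ≤ (t' - s')/b
          exact (div_le_div_iff_of_pos_right hb).2 (by rw [ht'def]; linarith)
      have hval' : u (T (s', t')) = 2 * c * t' := claim1 s' hs'abs hgood' t' ht'abs
      have h2cd : 2 * c * δ ≤ ε := by
        have : 2 * c * (ε/(2*c)) = ε := by field_simp
        nlinarith
      rw [hpeq] at hmono1
      rw [hval'] at hmono1
      have : 2 * c * t' ≤ 2 * c * t + 2 * c * δ := by
        rw [ht'def]
        nlinarith
      linarith
    have hge : 2 * c * t ≤ u p := by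
      have step : ∀ ε : ℝ, 0 < ε → 2 * c * t - ε ≤ u p := by
        intro ε hε
        set δ : ℝ := min (ε/(2*c)) (min (1/2 - s) (min (1/2 - t) (t + 1/2))) with hδdef
        have hδ1 : δ ≤ ε/(2*c) := min_le_left _ _
        have hδ2 : δ ≤ 1/2 - s := le_trans (min_le_right _ _) (min_le_left _ _)
        have hδ4 : δ ≤ t + 1/2 :=
          le_trans (min_le_right _ _) (le_trans (min_le_right _ _) (min_le_right _ _))
        have hδpos : 0 < δ := by
          refine lt_min (by positivity) (lt_min (by linarith) (lt_min (by linarith) (by linarith)))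
        clear_value δ
        obtain ⟨s', hs'1, hs'2, hgood'⟩ := hdense s δ hδpos
        set t'' : ℝ := t - (s' - s) with ht''def
        clear_value t''
        have hs'abs : |s'| < 1/2 := abs_lt.2 ⟨by linarith, by linarith⟩
        have ht''abs : |t''| < 1/2 := abs_lt.2 ⟨by rw [ht''def]; linarith, by rw [ht''def]; linarith⟩
        have hmono1 : u (T (s', t'')) ≤ u (T (s, t)) := by
          refine hmono _ (hmem s' t'' hs'abs ht''abs) _ (hmem s t (abs_lt.2 hs) (abs_lt.2 ht)) ?_ ?_
          · show (s' + t'')/a ≤ (s + t)/a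
            exact (div_le_div_iff_of_pos_right ha).2 (by rw [ht''def]; linarith)
          · show (t'' - s')/b ≤ (t - s)/b
            exact (div_le_div_iff_of_pos_right hb).2 (by rw [ht''def]; linarith)
        have hval' : u (T (s', t'')) = 2 * c * t'' := claim1 s' hs'abs hgood' t'' ht''abs
        have h2cd : 2 * c * δ ≤ ε := by
          have : 2 * c * (ε/(2*c)) = ε := by field_simp
          nlinarith
        rw [hpeq] at hmono1
        rw [hval'] at hmono1
        have : 2 * c * t - 2 * c * δ ≤ 2 * c * t'' := by
          rw [ht''def]
          nlinarith
        linarith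
      refine le_of_forall_sub_le ?_
      intro ε hε
      exact step ε hε
    linarith
  rw [goal2, htdef]
  ring
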